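/- In a hyperbolic triangle with sides r_i, r_j meeting at angle π − Θ (Θ ∈ (0,π) fixed) and opposite side l, the inner angles satisfy sinh r_j · ∂θ_i/∂r_j = sinh r_i · ∂θ_j/∂r_i. -/

import Mathlib

open Real

noncomputable def arcosh (x : ℝ) : ℝ := Real.log (x + Real.sqrt (x ^ 2 - 1))

/-- cosh of the side opposite the apex in the hyperbolic two-circle triangle. -/
noncomputable def hC (Θ ri rj : ℝ) : ℝ :=
  Real.cosh ri * Real.cosh rj + Real.sinh ri * Real.sinh rj * Real.cos Θ

noncomputable def hL (Θ ri rj : ℝ) : ℝ := _root_.arcosh (hC Θ ri rj)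

/-- Inner angle at vertex `i` of the hyperbolic triangle with side lengths `ri, rj`
adjacent to the apex angle `π − Θ`, via the hyperbolic law of cosines. -/
noncomputable def hθi (Θ ri rj : ℝ) : ℝ :=
  Real.arccos ((Real.cosh ri * Real.cosh (hL Θ ri rj) - Real.cosh rj) /
    (Real.sinh ri * Real.sinh (hL Θ ri rj)))

noncomputable def hθj (Θ ri rj : ℝ) : ℝ :=
  Real.arccos ((Real.cosh rj * Real.cosh (hL Θ ri rj) - Real.cosh ri) /
    (Real.sinh rj * Real.sinh (hL Θ ri rj)))

lemma cosh_arcosh {x : ℝ} (hx : 1 ≤ x) : Real.cosh (_root_.arcosh x) = x := by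
  have h0 : 0 ≤ x ^ 2 - 1 := by nlinarith
  have hs : Real.sqrt (x ^ 2 - 1) ^ 2 = x ^ 2 - 1 := Real.sq_sqrt h0
  have hsnn : 0 ≤ Real.sqrt (x ^ 2 - 1) := Real.sqrt_nonneg _
  have hpos : 0 < x + Real.sqrt (x ^ 2 - 1) := by linarith
  have hinv : (x + Real.sqrt (x ^ 2 - 1))⁻¹ = x - Real.sqrt (x ^ 2 - 1) := by
    exact inv_eq_of_mul_eq_one_right (by nlinarith)
  rw [_root_.arcosh, Real.cosh_log hpos, hinv]; ring

lemma sinh_arcosh {x : ℝ} (hx : 1 ≤ x) : Real.sinh (_root_.arcosh x) = Real.sqrt (x ^ 2 - 1) := by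
  have h0 : 0 ≤ x ^ 2 - 1 := by nlinarith
  have hs : Real.sqrt (x ^ 2 - 1) ^ 2 = x ^ 2 - 1 := Real.sq_sqrt h0
  have hsnn : 0 ≤ Real.sqrt (x ^ 2 - 1) := Real.sqrt_nonneg _
  have hpos : 0 < x + Real.sqrt (x ^ 2 - 1) := by linarith
  have hinv : (x + Real.sqrt (x ^ 2 - 1))⁻¹ = x - Real.sqrt (x ^ 2 - 1) := by
    exact inv_eq_of_mul_eq_one_right (by nlinarith)
  rw [_root_.arcosh, Real.sinh_log hpos, hinv]; ring

lemma aux_hasDerivAt (p q t y : ℝ) (hpq : p ^ 2 - q ^ 2 = 1) (hq : 0 < q)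
    (ht : t ^ 2 < 1) (hy : 0 < y)
    (hC1 : 1 < p * Real.cosh y + q * Real.sinh y * t) :
    HasDerivAt (fun z => Real.arccos ((q * Real.cosh z + p * Real.sinh z * t) /
        Real.sqrt ((p * Real.cosh z + q * Real.sinh z * t) ^ 2 - 1)))
      (-(((q * Real.sinh y + p * Real.cosh y * t) * ((p * Real.cosh y + q * Real.sinh y * t) ^ 2 - 1)
          - (q * Real.cosh y + p * Real.sinh y * t) * (p * Real.sinh y + q * Real.cosh y * t) *
            (p * Real.cosh y + q * Real.sinh y * t))
        / (((p * Real.cosh y + q * Real.sinh y * t) ^ 2 - 1) * (Real.sinh y * Real.sqrt (1 - t ^ 2))))) y := by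
  have hd : 0 < Real.sinh y := Real.sinh_pos_iff.2 hy
  set c := Real.cosh y with hc
  set d := Real.sinh y with hdd
  have hcd : c ^ 2 - d ^ 2 = 1 := Real.cosh_sq_sub_sinh_sq y
  set Cv := p * c + q * d * t with hCv
  set A := q * c + p * d * t with hA
  set B := p * d + q * c * t with hB
  set E := q * d + p * c * t with hE
  have hC2 : 0 < Cv ^ 2 - 1 := by nlinarith
  have hkey : Cv ^ 2 - 1 - A ^ 2 = d ^ 2 * (1 - t ^ 2) := by
    have : Cv ^ 2 - 1 - A ^ 2 - d ^ 2 * (1 - t ^ 2)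
        = (c ^ 2 - d ^ 2 * t ^ 2) * (p ^ 2 - q ^ 2 - 1) + (c ^ 2 - d ^ 2 - 1) := by ring
    rw [hpq, hcd] at this; linarith
  set s := Real.sqrt (Cv ^ 2 - 1) with hsdef
  have hs2 : s ^ 2 = Cv ^ 2 - 1 := Real.sq_sqrt hC2.le
  have hspos : 0 < s := Real.sqrt_pos.2 hC2
  have hA2 : A ^ 2 < s ^ 2 := by
    have h1t : 0 < 1 - t ^ 2 := by linarith
    have := mul_pos (pow_pos hd 2) h1t
    linarith
  -- derivative of C
  have hCd : HasDerivAt (fun z => p * Real.cosh z + q * Real.sinh z * t) B y := by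
    have := ((Real.hasDerivAt_cosh y).const_mul p).add
      (((Real.hasDerivAt_sinh y).const_mul q).mul_const t)
    exact this.congr_deriv (by rw [hB])
  have hAd : HasDerivAt (fun z => q * Real.cosh z + p * Real.sinh z * t) E y := by
    have := ((Real.hasDerivAt_cosh y).const_mul q).add
      (((Real.hasDerivAt_sinh y).const_mul p).mul_const t)
    exact this.congr_deriv (by rw [hE])
  have hsqd : HasDerivAt (fun z => Real.sqrt ((p * Real.cosh z + q * Real.sinh z * t) ^ 2 - 1))
      (Cv * B / s) y := by
    have h1 : HasDerivAt (fun z => (p * Real.cosh z + q * Real.sinh z * t) ^ 2 - 1)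
        (2 * Cv * B) y := by
      have := (hCd.pow 2).sub_const 1
      exact this.congr_deriv (by norm_num; exact Or.inl rfl)
    have h2 := (Real.hasDerivAt_sqrt (ne_of_gt hC2)).comp y h1
    refine h2.congr_deriv ?_
    rw [← hsdef]
    field_simp
  have hud : HasDerivAt (fun z => (q * Real.cosh z + p * Real.sinh z * t) /
      Real.sqrt ((p * Real.cosh z + q * Real.sinh z * t) ^ 2 - 1))
      ((E * s - A * (Cv * B / s)) / s ^ 2) y := hAd.div hsqd (ne_of_gt hspos)
  have hu2 : (A / s) ^ 2 < 1 := by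
    rw [div_pow, div_lt_one (by positivity)]
    exact hA2
  have hne1 : A / s ≠ -1 := by intro h; rw [h] at hu2; norm_num at hu2
  have hne2 : A / s ≠ 1 := by intro h; rw [h] at hu2; norm_num at hu2
  have harc := (Real.hasDerivAt_arccos hne1 hne2).comp y hud
  have hsq1t : 0 < Real.sqrt (1 - t ^ 2) := Real.sqrt_pos.2 (by linarith)
  have hst2 : Real.sqrt (1 - t ^ 2) ^ 2 = 1 - t ^ 2 := Real.sq_sqrt (by linarith)
  have hval : Real.sqrt (1 - (A / s) ^ 2) = d * Real.sqrt (1 - t ^ 2) / s := by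
    have h1 : 1 - (A / s) ^ 2 = (d * Real.sqrt (1 - t ^ 2) / s) ^ 2 := by
      rw [div_pow, div_pow, mul_pow, hst2]
      field_simp
      nlinarith [hkey, hs2]
    rw [h1, Real.sqrt_sq (by positivity)]
  refine harc.congr_deriv ?_
  rw [hval, ← hs2]
  field_simp

lemma deriv_hθi (Θ ri rj : ℝ) (hri : 0 < ri) (hrj : 0 < rj) (hΘ : Θ ∈ Set.Ioo 0 π) :
    Real.sinh rj * deriv (fun y => hθi Θ ri y) rj =
      -(((Real.sinh ri * Real.sinh rj + Real.cosh ri * Real.cosh rj * Real.cos Θ) *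
            (hC Θ ri rj ^ 2 - 1)
          - (Real.sinh ri * Real.cosh rj + Real.cosh ri * Real.sinh rj * Real.cos Θ) *
              (Real.cosh ri * Real.sinh rj + Real.sinh ri * Real.cosh rj * Real.cos Θ) *
              hC Θ ri rj)
        / ((hC Θ ri rj ^ 2 - 1) * Real.sin Θ)) := by
  obtain ⟨hΘ0, hΘπ⟩ := hΘ
  have hsin : 0 < Real.sin Θ := Real.sin_pos_of_pos_of_lt_pi hΘ0 hΘπ
  have ht2 : Real.cos Θ ^ 2 < 1 := by nlinarith [Real.sin_sq_add_cos_sq Θ]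
  have hp : Real.cosh ri ^ 2 - Real.sinh ri ^ 2 = 1 := Real.cosh_sq_sub_sinh_sq ri
  have hqi : 0 < Real.sinh ri := Real.sinh_pos_iff.2 hri
  have hCgt : ∀ y, 0 < y → 1 < hC Θ ri y := by
    intro y hy
    have hdy : 0 < Real.sinh y := Real.sinh_pos_iff.2 hy
    have h2 : 1 ≤ Real.cosh (ri - y) := Real.one_le_cosh _
    have h3 : -1 < Real.cos Θ := by nlinarith
    have h4 := Real.cosh_sub ri y
    simp only [hC]
    nlinarith [mul_pos hqi hdy]
  have heq : (fun y => hθi Θ ri y) =ᶠ[nhds rj]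
      (fun y => Real.arccos ((Real.sinh ri * Real.cosh y + Real.cosh ri * Real.sinh y * Real.cos Θ) /
        Real.sqrt ((Real.cosh ri * Real.cosh y + Real.sinh ri * Real.sinh y * Real.cos Θ) ^ 2 - 1))) := by
    filter_upwards [Ioi_mem_nhds hrj] with y hy
    have h1 := hCgt y hy
    simp only [hθi, hL]
    rw [_root_.cosh_arcosh h1.le, _root_.sinh_arcosh h1.le]
    have hnum : Real.cosh ri * hC Θ ri y - Real.cosh y
        = Real.sinh ri * (Real.sinh ri * Real.cosh y + Real.cosh ri * Real.sinh y * Real.cos Θ) := by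
      simp only [hC]
      linear_combination Real.cosh y * hp
    rw [hnum, show hC Θ ri y
        = Real.cosh ri * Real.cosh y + Real.sinh ri * Real.sinh y * Real.cos Θ from rfl,
      mul_div_mul_left _ _ (ne_of_gt hqi)]
  have hC1 : 1 < Real.cosh ri * Real.cosh rj + Real.sinh ri * Real.sinh rj * Real.cos Θ := by
    have := hCgt rj hrj
    simpa [hC] using this
  have hder := aux_hasDerivAt (Real.cosh ri) (Real.sinh ri) (Real.cos Θ) rj hp hqi ht2 hrj hC1
  have hd2 := hder.congr_of_eventuallyEq heq
  rw [hd2.deriv]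
  have hsineq : Real.sin Θ = Real.sqrt (1 - Real.cos Θ ^ 2) :=
    Real.sin_eq_sqrt_one_sub_cos_sq hΘ0.le hΘπ.le
  have hCrw : hC Θ ri rj = Real.cosh ri * Real.cosh rj + Real.sinh ri * Real.sinh rj * Real.cos Θ := rfl
  rw [hsineq, hCrw]
  have hC2 : (0:ℝ) < (Real.cosh ri * Real.cosh rj + Real.sinh ri * Real.sinh rj * Real.cos Θ) ^ 2 - 1 := by
    nlinarith
  have hdj : 0 < Real.sinh rj := Real.sinh_pos_iff.2 hrj
  have hsq : 0 < Real.sqrt (1 - Real.cos Θ ^ 2) := Real.sqrt_pos.2 (by linarith)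
  field_simp

theorem hyperbolic_angle_derivative_symmetry
    (ri rj Θ : ℝ) (hri : 0 < ri) (hrj : 0 < rj)
    (hΘ : Θ ∈ Set.Ioo 0 π) :
    Real.sinh rj * deriv (fun y => hθi Θ ri y) rj =
      Real.sinh ri * deriv (fun x => hθj Θ x rj) ri := by
  have hswap : (fun x => hθj Θ x rj) = (fun x => hθi Θ rj x) := by
    funext x
    simp only [hθj, hθi, hL]
    rw [show hC Θ x rj = hC Θ rj x by simp only [hC]; ring]
  rw [hswap, deriv_hθi Θ ri rj hri hrj hΘ, deriv_hθi Θ rj ri hrj hri hΘ]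
  rw [show hC Θ rj ri = hC Θ ri rj by simp only [hC]; ring]
  ring
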